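/- arXiv:2101.10640 — 2 statements merged into one kernel-verified Lean document; each statement's English description precedes it below -/
import Mathlib

section
/- For fixed d > 0, the relative standard deviation of r_k, namely √(Γ(k+2/d)·Γ(k) − Γ(k+1/d)²)/Γ(k+1/d), is asymptotically equivalent to 1/(d·√k) as k → ∞. -/
open Real Filter Finset

lemma gammaSeq_combo (x a : ℝ) (hx : 0 < x) (ha : 0 < a) {n : ℕ} (hn : 0 < n) :
    Real.GammaSeq x n * Real.GammaSeq (x + 2*a) n / (Real.GammaSeq (x + a) n)^2
      = ∏ j ∈ Finset.range (n+1), ((x + a + j)^2 / ((x + j) * (x + 2*a + j))) := by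
  have hN : (0:ℝ) < (n:ℝ) := by exact_mod_cast hn
  have hA : (0:ℝ) < ∏ j ∈ Finset.range (n+1), (x + j) :=
    Finset.prod_pos (fun j _ => by positivity)
  have hB : (0:ℝ) < ∏ j ∈ Finset.range (n+1), (x + 2*a + j) :=
    Finset.prod_pos (fun j _ => by positivity)
  have hC : (0:ℝ) < ∏ j ∈ Finset.range (n+1), (x + a + j) :=
    Finset.prod_pos (fun j _ => by positivity)
  have hF : (0:ℝ) < (Nat.factorial n : ℝ) := by exact_mod_cast n.factorial_pos
  have hpow : (n:ℝ)^x * (n:ℝ)^(x+2*a) = ((n:ℝ)^(x+a))^2 := by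
    rw [← Real.rpow_add hN, sq, ← Real.rpow_add hN]; ring_nf
  have hrhs : ∏ j ∈ Finset.range (n+1), ((x + a + j)^2 / ((x + j) * (x + 2*a + j)))
      = (∏ j ∈ Finset.range (n+1), (x + a + j))^2 /
        ((∏ j ∈ Finset.range (n+1), (x + j)) * (∏ j ∈ Finset.range (n+1), (x + 2*a + j))) := by
    rw [Finset.prod_div_distrib, Finset.prod_mul_distrib, ← Finset.prod_pow]
  rw [hrhs]
  simp only [Real.GammaSeq]
  rw [div_pow, mul_pow, div_mul_div_comm, div_div_div_eq]
  rw [eq_div_iff (by positivity)]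
  field_simp
  linear_combination hpow

lemma prod_tendsto_R (x a : ℝ) (hx : 0 < x) (ha : 0 < a) :
    Tendsto (fun n : ℕ => ∏ j ∈ Finset.range (n+1),
        ((x + a + j)^2 / ((x + j) * (x + 2*a + j)))) atTop
      (nhds (Real.Gamma x * Real.Gamma (x + 2*a) / Real.Gamma (x + a)^2)) := by
  have hG : Real.Gamma (x + a) ≠ 0 := (Real.Gamma_pos_of_pos (by linarith)).ne'
  have h := ((Real.GammaSeq_tendsto_Gamma x).mul
      (Real.GammaSeq_tendsto_Gamma (x + 2*a))).div
      ((Real.GammaSeq_tendsto_Gamma (x + a)).pow 2) (by positivity)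
  refine h.congr' ?_
  filter_upwards [eventually_gt_atTop 0] with n hn
  exact gammaSeq_combo x a hx ha hn

-- generic product bounds
lemma prod_lb (q : ℕ → ℝ) (hq : ∀ j, 0 ≤ q j) (m : ℕ) :
    1 + ∑ j ∈ Finset.range m, q j ≤ ∏ j ∈ Finset.range m, (1 + q j) := by
  induction m with
  | zero => simp
  | succ m ih =>
    rw [Finset.prod_range_succ, Finset.sum_range_succ]
    have h1 : (0:ℝ) ≤ ∑ j ∈ Finset.range m, q j := Finset.sum_nonneg (fun j _ => hq j)
    nlinarith [hq m, ih]

lemma prod_ub (q : ℕ → ℝ) (hq : ∀ j, 0 ≤ q j) (hq1 : ∀ j, q j ≤ 1) (m : ℕ) :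
    1 - ∑ j ∈ Finset.range m, q j ≤ ∏ j ∈ Finset.range m, (1 - q j) := by
  induction m with
  | zero => simp
  | succ m ih =>
    rw [Finset.prod_range_succ, Finset.sum_range_succ]
    have h1 : (0:ℝ) ≤ ∑ j ∈ Finset.range m, q j := Finset.sum_nonneg (fun j _ => hq j)
    nlinarith [hq m, hq1 m, ih]

lemma R_bounds (x a : ℝ) (ha : 0 < a) (hx : 0 < x) (hU : a^2 < x + a - 1) :
    1 + a^2/(x+a) ≤ Real.Gamma x * Real.Gamma (x + 2*a) / Real.Gamma (x + a)^2 ∧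
    Real.Gamma x * Real.Gamma (x + 2*a) / Real.Gamma (x + a)^2 ≤ 1/(1 - a^2/(x+a-1)) := by
  set c := x + a with hc
  have hc1 : 1 < c := by nlinarith [sq_nonneg a]
  have hc0 : 0 < c := by linarith
  set q : ℕ → ℝ := fun j => a^2/(c+j)^2 with hqdef
  have hqpos : ∀ j : ℕ, 0 < q j := fun j => by
    have : (0:ℝ) < c + j := by positivity
    positivity
  have hqlt : ∀ j : ℕ, q j < 1 := by
    intro j
    have hj : (0:ℝ) ≤ (j:ℝ) := Nat.cast_nonneg j
    have h2 : a < c + j := by nlinarith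
    rw [hqdef, div_lt_one (by positivity)]
    nlinarith
  have hfac : ∀ j : ℕ, (x + a + j)^2 / ((x + j) * (x + 2*a + j)) = 1/(1 - q j) := by
    intro j
    have hden : (x + j) * (x + 2*a + j) = (c+j)^2 - a^2 := by rw [hc]; ring
    have hcj : (0:ℝ) < (c+j)^2 := by positivity
    rw [hden, hqdef]
    rw [one_sub_div (ne_of_gt hcj), one_div_div]
  have hsum_ub : ∀ m : ℕ, ∑ j ∈ Finset.range m, q j ≤ a^2/(c-1) := by
    intro m
    set f : ℕ → ℝ := fun j => a^2/(c-1+j) with hf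
    have key : ∀ j : ℕ, q j ≤ f j - f (j+1) := by
      intro j
      have hj : (0:ℝ) ≤ (j:ℝ) := Nat.cast_nonneg j
      have hj0 : (0:ℝ) < c - 1 + j := by linarith
      have hj1 : (0:ℝ) < c - 1 + (j+1:ℕ) := by push_cast; linarith
      rw [hf]
      simp only []
      rw [div_sub_div _ _ (ne_of_gt hj0) (ne_of_gt hj1), hqdef]
      rw [div_le_div_iff₀ (by positivity) (by positivity)]
      push_cast
      nlinarith [sq_nonneg a, mul_pos hj0 hj1]
    calc ∑ j ∈ Finset.range m, q j ≤ ∑ j ∈ Finset.range m, (f j - f (j+1)) :=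
          Finset.sum_le_sum (fun j _ => key j)
      _ = f 0 - f m := Finset.sum_range_sub' f m
      _ ≤ a^2/(c-1) := by
          have hm : (0:ℝ) ≤ (m:ℝ) := Nat.cast_nonneg m
          have h1 : (0:ℝ) ≤ a^2/(c-1+m) := div_nonneg (sq_nonneg a) (by linarith)
          have h2 : f 0 = a^2/(c-1) := by rw [hf]; norm_num
          have h3 : f m = a^2/(c-1+m) := rfl
          rw [h2, h3]
          linarith
  have hsum_lb : ∀ m : ℕ, a^2/c - a^2/(c+m) ≤ ∑ j ∈ Finset.range m, q j := by
    intro m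
    set f : ℕ → ℝ := fun j => a^2/(c+j) with hf
    have key : ∀ j : ℕ, f j - f (j+1) ≤ q j := by
      intro j
      have hj : (0:ℝ) ≤ (j:ℝ) := Nat.cast_nonneg j
      have hj0 : (0:ℝ) < c + j := by positivity
      have hj1 : (0:ℝ) < c + (j+1:ℕ) := by push_cast; linarith
      rw [hf]
      simp only []
      rw [div_sub_div _ _ (ne_of_gt hj0) (ne_of_gt hj1), hqdef]
      rw [div_le_div_iff₀ (by positivity) (by positivity)]
      push_cast
      nlinarith [sq_nonneg a, mul_pos hj0 hj1]
    calc a^2/c - a^2/(c+m) = f 0 - f m := by rw [hf]; norm_num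
      _ = ∑ j ∈ Finset.range m, (f j - f (j+1)) := (Finset.sum_range_sub' f m).symm
      _ ≤ ∑ j ∈ Finset.range m, q j := Finset.sum_le_sum (fun j _ => key j)
  have hUlt : a^2/(c-1) < 1 := by
    rw [div_lt_one (by linarith)]; linarith
  have hP : ∀ m : ℕ, ∏ j ∈ Finset.range (m+1), ((x + a + j)^2 / ((x + j) * (x + 2*a + j)))
      = ∏ j ∈ Finset.range (m+1), (1/(1 - q j)) :=
    fun m => Finset.prod_congr rfl (fun j _ => hfac j)
  have hPlb : ∀ m : ℕ, 1 + (a^2/c - a^2/(c+(m+1:ℕ))) ≤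
      ∏ j ∈ Finset.range (m+1), ((x + a + j)^2 / ((x + j) * (x + 2*a + j))) := by
    intro m
    rw [hP m]
    have h1 : ∀ j ∈ Finset.range (m+1), 1 + q j ≤ 1/(1 - q j) := by
      intro j _
      rw [le_div_iff₀ (by linarith [hqlt j])]
      nlinarith [hqpos j, hqlt j]
    calc 1 + (a^2/c - a^2/(c+(m+1:ℕ))) ≤ 1 + ∑ j ∈ Finset.range (m+1), q j := by
          linarith [hsum_lb (m+1)]
      _ ≤ ∏ j ∈ Finset.range (m+1), (1 + q j) := prod_lb q (fun j => (hqpos j).le) (m+1)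
      _ ≤ ∏ j ∈ Finset.range (m+1), (1/(1 - q j)) :=
          Finset.prod_le_prod (fun j _ => by positivity) h1
  have hPub : ∀ m : ℕ, ∏ j ∈ Finset.range (m+1), ((x + a + j)^2 / ((x + j) * (x + 2*a + j)))
      ≤ 1/(1 - a^2/(c-1)) := by
    intro m
    rw [hP m]
    have hprod : 1 - a^2/(c-1) ≤ ∏ j ∈ Finset.range (m+1), (1 - q j) := by
      calc 1 - a^2/(c-1) ≤ 1 - ∑ j ∈ Finset.range (m+1), q j := by
            linarith [hsum_ub (m+1)]
        _ ≤ ∏ j ∈ Finset.range (m+1), (1 - q j) :=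
            prod_ub q (fun j => (hqpos j).le) (fun j => (hqlt j).le) (m+1)
    have hpos : (0:ℝ) < 1 - a^2/(c-1) := by linarith
    simp only [one_div]
    rw [Finset.prod_inv_distrib]
    exact inv_anti₀ hpos hprod
  constructor
  · have hat : Tendsto (fun m : ℕ => c + ((m+1:ℕ):ℝ)) atTop atTop := by
      apply tendsto_atTop_add_const_left
      exact_mod_cast (tendsto_natCast_atTop_atTop (R := ℝ)).comp (tendsto_add_atTop_nat 1)
    have h0 : Tendsto (fun m : ℕ => a^2/(c+((m+1:ℕ):ℝ))) atTop (nhds 0) :=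
      Tendsto.div_atTop tendsto_const_nhds hat
    have hlim : Tendsto (fun m : ℕ => 1 + (a^2/c - a^2/(c+((m+1:ℕ):ℝ)))) atTop
        (nhds (1 + (a^2/c - 0))) :=
      tendsto_const_nhds.add (tendsto_const_nhds.sub h0)
    have := le_of_tendsto_of_tendsto' hlim (prod_tendsto_R x a hx ha) (fun m => hPlb m)
    rw [sub_zero] at this
    rw [hc]
    linarith
  · exact le_of_tendsto (prod_tendsto_R x a hx ha) (Eventually.of_forall hPub)

lemma kR_tendsto (a : ℝ) (ha : 0 < a) :
    Tendsto (fun k : ℕ => (k:ℝ) *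
        (Real.Gamma k * Real.Gamma ((k:ℝ) + 2*a) / Real.Gamma ((k:ℝ) + a)^2 - 1))
      atTop (nhds (a^2)) := by
  have hb : Tendsto (fun k : ℕ => (k:ℝ) + a) atTop atTop :=
    tendsto_atTop_add_const_right _ a tendsto_natCast_atTop_atTop
  have hb1 : Tendsto (fun k : ℕ => (k:ℝ) + a - 1) atTop atTop :=
    tendsto_atTop_add_const_right _ (-1) hb |>.congr (fun k => by ring)
  -- lower bound sequence
  have hlow : Tendsto (fun k : ℕ => (k:ℝ) * (a^2/((k:ℝ)+a))) atTop (nhds (a^2)) := by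
    have h1 : Tendsto (fun k : ℕ => a^3/((k:ℝ)+a)) atTop (nhds 0) :=
      Tendsto.div_atTop tendsto_const_nhds hb
    have h2 : Tendsto (fun k : ℕ => a^2 - a^3/((k:ℝ)+a)) atTop (nhds (a^2 - 0)) :=
      tendsto_const_nhds.sub h1
    rw [sub_zero] at h2
    refine h2.congr' ?_
    filter_upwards [eventually_gt_atTop 0] with k hk
    have hk0 : (0:ℝ) < (k:ℝ) + a := by positivity
    field_simp
    ring
  -- upper bound sequence
  have hupp : Tendsto (fun k : ℕ =>
      ((k:ℝ) * (a^2/((k:ℝ)+a-1))) * (1 - a^2/((k:ℝ)+a-1))⁻¹) atTop (nhds (a^2)) := by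
    have h1 : Tendsto (fun k : ℕ => a^2/((k:ℝ)+a-1)) atTop (nhds 0) :=
      Tendsto.div_atTop tendsto_const_nhds hb1
    have h2 : Tendsto (fun k : ℕ => (1 - a^2/((k:ℝ)+a-1))⁻¹) atTop (nhds 1) := by
      have := (tendsto_const_nhds.sub h1).inv₀ (by norm_num : (1:ℝ) - 0 ≠ 0)
      simpa using this
    have h3 : Tendsto (fun k : ℕ => (k:ℝ) * (a^2/((k:ℝ)+a-1))) atTop (nhds (a^2)) := by
      have h4 : Tendsto (fun k : ℕ => a^2*(a-1)/((k:ℝ)+a-1)) atTop (nhds 0) :=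
        Tendsto.div_atTop tendsto_const_nhds hb1
      have h5 : Tendsto (fun k : ℕ => a^2 - a^2*(a-1)/((k:ℝ)+a-1)) atTop (nhds (a^2 - 0)) :=
        tendsto_const_nhds.sub h4
      rw [sub_zero] at h5
      refine h5.congr' ?_
      filter_upwards [hb1.eventually_gt_atTop 0] with k hk
      have : (k:ℝ) + a - 1 ≠ 0 := ne_of_gt hk
      field_simp
      ring
    have := h3.mul h2
    simpa using this
  refine tendsto_of_tendsto_of_tendsto_of_le_of_le' hlow hupp ?_ ?_
  · filter_upwards [tendsto_natCast_atTop_atTop.eventually_ge_atTop (a^2+2)] with k hk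
    have hx : (0:ℝ) < (k:ℝ) := by nlinarith [sq_nonneg a]
    have hU : a^2 < (k:ℝ) + a - 1 := by linarith
    have hR := (R_bounds (k:ℝ) a ha hx hU).1
    have : a^2/((k:ℝ)+a) ≤ Real.Gamma k * Real.Gamma ((k:ℝ)+2*a) / Real.Gamma ((k:ℝ)+a)^2 - 1 := by
      linarith
    exact mul_le_mul_of_nonneg_left this hx.le
  · filter_upwards [tendsto_natCast_atTop_atTop.eventually_ge_atTop (a^2+2)] with k hk
    have hx : (0:ℝ) < (k:ℝ) := by nlinarith [sq_nonneg a]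
    have hU : a^2 < (k:ℝ) + a - 1 := by linarith
    have hc1 : (0:ℝ) < (k:ℝ) + a - 1 := by nlinarith [sq_nonneg a]
    have hUlt : a^2/((k:ℝ)+a-1) < 1 := by rw [div_lt_one hc1]; linarith
    have hR := (R_bounds (k:ℝ) a ha hx hU).2
    have hgen : ∀ u : ℝ, 1 - u ≠ 0 → 1/(1-u) - 1 = u * (1-u)⁻¹ := by
      intro u hu
      field_simp
      ring
    have heq : 1/(1 - a^2/((k:ℝ)+a-1)) - 1 = (a^2/((k:ℝ)+a-1)) * (1 - a^2/((k:ℝ)+a-1))⁻¹ :=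
      hgen _ (by linarith)
    have : Real.Gamma k * Real.Gamma ((k:ℝ)+2*a) / Real.Gamma ((k:ℝ)+a)^2 - 1
        ≤ (a^2/((k:ℝ)+a-1)) * (1 - a^2/((k:ℝ)+a-1))⁻¹ := by
      rw [← heq]; linarith
    calc (k:ℝ) * (Real.Gamma k * Real.Gamma ((k:ℝ)+2*a) / Real.Gamma ((k:ℝ)+a)^2 - 1)
        ≤ (k:ℝ) * ((a^2/((k:ℝ)+a-1)) * (1 - a^2/((k:ℝ)+a-1))⁻¹) :=
          mul_le_mul_of_nonneg_left this hx.le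
      _ = ((k:ℝ) * (a^2/((k:ℝ)+a-1))) * (1 - a^2/((k:ℝ)+a-1))⁻¹ := by ring

theorem relative_std_asymptotics (d : ℝ) (hd : 0 < d) :
    Tendsto (fun k : ℕ =>
        (Real.sqrt (Real.Gamma ((k : ℝ) + 2 / d) * Real.Gamma (k : ℝ)
            - Real.Gamma ((k : ℝ) + 1 / d) ^ 2) / Real.Gamma ((k : ℝ) + 1 / d))
          / (1 / (d * Real.sqrt k)))
      atTop (nhds 1) := by
  have ha : 0 < 1/d := by positivity
  set a := 1/d with hadef
  have hmain := kR_tendsto a ha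
  have hda : d^2 * a^2 = 1 := by rw [hadef]; field_simp
  have h1 : Tendsto (fun k : ℕ => d^2 * ((k:ℝ) *
      (Real.Gamma k * Real.Gamma ((k:ℝ) + 2*a) / Real.Gamma ((k:ℝ) + a)^2 - 1)))
      atTop (nhds 1) := by
    have := hmain.const_mul (d^2)
    rwa [hda] at this
  have h2 : Tendsto (fun k : ℕ => Real.sqrt (d^2 * ((k:ℝ) *
      (Real.Gamma k * Real.Gamma ((k:ℝ) + 2*a) / Real.Gamma ((k:ℝ) + a)^2 - 1))))
      atTop (nhds 1) := by
    have := (Real.continuous_sqrt.tendsto 1).comp h1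
    simpa [Function.comp_def] using this
  refine h2.congr' ?_
  filter_upwards [tendsto_natCast_atTop_atTop.eventually_ge_atTop (a^2+2)] with k hk
  have hx : (0:ℝ) < (k:ℝ) := by nlinarith [sq_nonneg a]
  have hU : a^2 < (k:ℝ) + a - 1 := by linarith
  set G0 := Real.Gamma (k:ℝ) with hG0
  set G1 := Real.Gamma ((k:ℝ) + a) with hG1
  set G2 := Real.Gamma ((k:ℝ) + 2*a) with hG2
  have hG1pos : 0 < G1 := Real.Gamma_pos_of_pos (by linarith)
  have hRlb := (R_bounds (k:ℝ) a ha hx hU).1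
  have hApos : 0 ≤ G2 * G0 - G1^2 := by
    have h3 : (1:ℝ) ≤ G0 * G2 / G1^2 := by
      have : (0:ℝ) < a^2/((k:ℝ)+a) := by positivity
      linarith
    rw [one_le_div (by positivity : (0:ℝ) < G1^2)] at h3
    nlinarith
  have h2a : (k:ℝ) + 2/d = (k:ℝ) + 2*a := by rw [hadef]; ring
  rw [h2a]
  -- now prove the equality
  have hAeq : d^2 * ((k:ℝ) * (G0 * G2 / G1^2 - 1))
      = (G2 * G0 - G1^2) * (d^2 * (k:ℝ) / G1^2) := by
    field_simp
  rw [hAeq, Real.sqrt_mul hApos]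
  have hs1 : Real.sqrt (d^2 * (k:ℝ) / G1^2) = d * Real.sqrt k / G1 := by
    rw [Real.sqrt_div (by positivity), Real.sqrt_mul (sq_nonneg d), Real.sqrt_sq hd.le,
      Real.sqrt_sq hG1pos.le]
  rw [hs1, div_eq_mul_inv _ (1 / (d * Real.sqrt (k:ℝ))), one_div, inv_inv]
  ring
end

section
/- For d > 2, the standard deviation of r_k (with density p_k) is asymptotically decreasing in k: precisely, k^{1/2 − 1/d}·√(Γ(k+2/d)Γ(k) − Γ(k+1/d)²)/Γ(k) converges to 1/d as k → ∞. -/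
open Real Filter Finset Topology

private lemma one_add_sum_le_prod_aux {s : Finset ℕ} {f : ℕ → ℝ} (h : ∀ i ∈ s, 0 ≤ f i) :
    1 + ∑ i ∈ s, f i ≤ ∏ i ∈ s, (1 + f i) := by
  induction s using Finset.cons_induction with
  | empty => simp
  | cons i s hi ih =>
    rw [Finset.sum_cons, Finset.prod_cons]
    have h1 : 0 ≤ f i := h i (Finset.mem_cons_self i s)
    have h2 : ∀ j ∈ s, 0 ≤ f j := fun j hj => h j (Finset.mem_cons_of_mem hj)
    have h3 := ih h2
    have h4 : 0 ≤ ∑ j ∈ s, f j := Finset.sum_nonneg h2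
    nlinarith [mul_le_mul_of_nonneg_left h3 h1]

/-- Product formula bounds for `R k = Γ(k+2a)Γ(k)/Γ(k+a)^2`. -/
private lemma R_bounds_s12 {a : ℝ} (ha : 0 < a) (ha2 : 2 * a ≤ 1) {k : ℕ} (hk : 1 ≤ k) :
    1 + a ^ 2 / (k : ℝ) ≤
        Gamma ((k : ℝ) + 2 * a) * Gamma (k : ℝ) / Gamma ((k : ℝ) + a) ^ 2 ∧
      Gamma ((k : ℝ) + 2 * a) * Gamma (k : ℝ) / Gamma ((k : ℝ) + a) ^ 2 ≤
        exp (a ^ 2 / ((k : ℝ) - 1 + 2 * a)) := by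
  set K : ℝ := (k : ℝ) with hKdef
  have hK : (1 : ℝ) ≤ K := by rw [hKdef]; exact_mod_cast hk
  have hK0 : (0 : ℝ) < K := lt_of_lt_of_le one_pos hK
  have hc : (0 : ℝ) < K - 1 + 2 * a := by linarith
  have hG1 : 0 < Gamma (K + a) := Gamma_pos_of_pos (by linarith)
  -- the quotient of Gamma sequences tends to R
  have hQ : Tendsto (fun n => GammaSeq (K + 2 * a) n * GammaSeq K n / GammaSeq (K + a) n ^ 2)
      atTop (𝓝 (Gamma (K + 2 * a) * Gamma K / Gamma (K + a) ^ 2)) :=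
    ((GammaSeq_tendsto_Gamma (K + 2 * a)).mul (GammaSeq_tendsto_Gamma K)).div
      ((GammaSeq_tendsto_Gamma (K + a)).pow 2) (pow_ne_zero 2 hG1.ne')
  -- the quotient equals a nice product
  have hprod : ∀ n : ℕ, 1 ≤ n →
      GammaSeq (K + 2 * a) n * GammaSeq K n / GammaSeq (K + a) n ^ 2 =
        ∏ j ∈ range (n + 1), (1 + a ^ 2 / ((K + j) * (K + j + 2 * a))) := by
    intro n hn
    have hN : (0 : ℝ) < (n : ℝ) := by exact_mod_cast hn
    have hRHS : ∏ j ∈ range (n + 1), (1 + a ^ 2 / ((K + j) * (K + j + 2 * a))) =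
        (∏ j ∈ range (n + 1), (K + a + j)) ^ 2 /
          ((∏ j ∈ range (n + 1), (K + 2 * a + j)) * ∏ j ∈ range (n + 1), (K + j)) := by
      rw [← Finset.prod_pow, ← Finset.prod_mul_distrib, ← Finset.prod_div_distrib]
      refine Finset.prod_congr rfl fun j _ => ?_
      have hj1 : (0 : ℝ) < K + j := by positivity
      have hj2 : (0 : ℝ) < K + j + 2 * a := by positivity
      field_simp
      ring
    rw [hRHS]
    simp only [GammaSeq]
    have hP0 : (0 : ℝ) < ∏ j ∈ range (n + 1), (K + (j : ℝ)) :=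
      Finset.prod_pos fun j _ => by positivity
    have hP1 : (0 : ℝ) < ∏ j ∈ range (n + 1), (K + a + (j : ℝ)) :=
      Finset.prod_pos fun j _ => by positivity
    have hP2 : (0 : ℝ) < ∏ j ∈ range (n + 1), (K + 2 * a + (j : ℝ)) :=
      Finset.prod_pos fun j _ => by positivity
    have hF : (0 : ℝ) < (n.factorial : ℝ) := by positivity
    have hA0 : (0 : ℝ) < (n : ℝ) ^ K := rpow_pos_of_pos hN _
    have hA1 : (0 : ℝ) < (n : ℝ) ^ (K + a) := rpow_pos_of_pos hN _
    have hA2 : (0 : ℝ) < (n : ℝ) ^ (K + 2 * a) := rpow_pos_of_pos hN _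
    have h1 : (n : ℝ) ^ (K + 2 * a) * (n : ℝ) ^ K = ((n : ℝ) ^ (K + a)) ^ 2 := by
      rw [sq, ← rpow_add hN, ← rpow_add hN]
      ring_nf
    field_simp
    linear_combination h1
  -- upper bound for the partial products
  have hub : ∀ n : ℕ,
      ∏ j ∈ range (n + 1), (1 + a ^ 2 / ((K + j) * (K + j + 2 * a))) ≤
        exp (a ^ 2 / (K - 1 + 2 * a)) := by
    intro n
    have step1 : ∏ j ∈ range (n + 1), (1 + a ^ 2 / ((K + j) * (K + j + 2 * a))) ≤
        exp (∑ j ∈ range (n + 1), a ^ 2 / ((K + j) * (K + j + 2 * a))) := by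
      rw [exp_sum]
      refine Finset.prod_le_prod (fun j _ => by positivity) fun j _ => ?_
      have := Real.add_one_le_exp (a ^ 2 / ((K + j) * (K + j + 2 * a)))
      linarith
    refine step1.trans (exp_le_exp.2 ?_)
    have step2 : ∑ j ∈ range (n + 1), a ^ 2 / ((K + j) * (K + j + 2 * a)) ≤
        ∑ j ∈ range (n + 1),
          (a ^ 2 / (K - 1 + 2 * a + j) - a ^ 2 / (K - 1 + 2 * a + (j + 1))) := by
      refine Finset.sum_le_sum fun j _ => ?_
      have hj1 : (0 : ℝ) < K + j := by positivity
      have hj2 : (0 : ℝ) < K - 1 + 2 * a + j := by positivity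
      have hj3 : K - 1 + 2 * a + (j + 1) = K + j + 2 * a := by ring
      rw [hj3]
      have hle : K - 1 + 2 * a + j ≤ K + j := by linarith
      have h4 : (0 : ℝ) < K + j + 2 * a := by positivity
      rw [div_sub_div _ _ hj2.ne' h4.ne']
      have hnum : a ^ 2 * (K + j + 2 * a) - (K - 1 + 2 * a + j) * a ^ 2 = a ^ 2 := by ring
      rw [hnum]
      refine div_le_div_of_nonneg_left (by positivity) (by positivity) ?_
      exact mul_le_mul_of_nonneg_right hle h4.le |>.trans_eq rfl
    refine step2.trans ?_
    have htel := Finset.sum_range_sub' (fun j : ℕ => a ^ 2 / (K - 1 + 2 * a + j)) (n + 1)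
    simp only [Nat.cast_zero, add_zero] at htel
    push_cast at htel ⊢
    rw [htel]
    have hpos : (0 : ℝ) ≤ a ^ 2 / (K - 1 + 2 * a + ((n : ℝ) + 1)) := by positivity
    linarith
  -- lower bound for the partial products
  have hlb : ∀ n : ℕ,
      1 + (a ^ 2 / K - a ^ 2 / (K + (n + 1))) ≤
        ∏ j ∈ range (n + 1), (1 + a ^ 2 / ((K + j) * (K + j + 2 * a))) := by
    intro n
    have step1 : 1 + ∑ j ∈ range (n + 1), a ^ 2 / ((K + j) * (K + j + 2 * a)) ≤
        ∏ j ∈ range (n + 1), (1 + a ^ 2 / ((K + j) * (K + j + 2 * a))) :=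
      one_add_sum_le_prod_aux fun j _ => by positivity
    refine le_trans ?_ step1
    have step2 : ∑ j ∈ range (n + 1), (a ^ 2 / (K + j) - a ^ 2 / (K + (j + 1))) ≤
        ∑ j ∈ range (n + 1), a ^ 2 / ((K + j) * (K + j + 2 * a)) := by
      refine Finset.sum_le_sum fun j _ => ?_
      have hj1 : (0 : ℝ) < K + j := by positivity
      have hj2 : (0 : ℝ) < K + (j + 1) := by positivity
      have h4 : (0 : ℝ) < K + j + 2 * a := by positivity
      rw [div_sub_div _ _ hj1.ne' hj2.ne']
      have hnum : a ^ 2 * (K + (j + 1)) - (K + j) * a ^ 2 = a ^ 2 := by ring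
      rw [hnum]
      refine div_le_div_of_nonneg_left (by positivity) (by positivity) ?_
      have : K + j + 2 * a ≤ K + (j + 1) := by linarith
      exact mul_le_mul_of_nonneg_left this hj1.le
    have htel := Finset.sum_range_sub' (fun j => a ^ 2 / (K + j)) (n + 1)
    simp only [Nat.cast_zero, add_zero] at htel
    push_cast at htel step2 ⊢
    rw [htel] at step2
    linarith
  constructor
  · -- lower bound on R via limit
    have hlow : Tendsto (fun n : ℕ => 1 + (a ^ 2 / K - a ^ 2 / (K + (n + 1)))) atTop
        (𝓝 (1 + a ^ 2 / K)) := by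
      have h1 : Tendsto (fun n : ℕ => (K + ((n : ℝ) + 1))) atTop atTop :=
        tendsto_atTop_add_const_left _ _
          (tendsto_atTop_add_const_right _ _ tendsto_natCast_atTop_atTop)
      have h2 : Tendsto (fun n : ℕ => a ^ 2 / (K + ((n : ℝ) + 1))) atTop (𝓝 0) :=
        Tendsto.div_atTop tendsto_const_nhds h1
      have := (tendsto_const_nhds (x := a ^ 2 / K) (f := atTop (α := ℕ))).sub h2
      have h3 := (tendsto_const_nhds (x := (1 : ℝ)) (f := atTop (α := ℕ))).add this
      simpa using h3
    refine le_of_tendsto_of_tendsto hlow hQ ?_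
    filter_upwards [eventually_ge_atTop 1] with n hn
    rw [hprod n hn]
    exact hlb n
  · refine le_of_tendsto hQ ?_
    filter_upwards [eventually_ge_atTop 1] with n hn
    rw [hprod n hn]
    exact hub n

/-- Wendel's inequality bounds for `Γ(k+a)/(Γ(k)·k^a)`. -/
private lemma W_bounds {a : ℝ} (ha : 0 < a) (ha1 : a < 1) {k : ℕ} (hk : 1 ≤ k) :
    ((k : ℝ) / ((k : ℝ) + a)) ^ (1 - a) ≤ Gamma ((k : ℝ) + a) / (Gamma (k : ℝ) * (k : ℝ) ^ a) ∧
      Gamma ((k : ℝ) + a) / (Gamma (k : ℝ) * (k : ℝ) ^ a) ≤ 1 := by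
  set K : ℝ := (k : ℝ) with hKdef
  have hK : (1 : ℝ) ≤ K := by rw [hKdef]; exact_mod_cast hk
  have hK0 : (0 : ℝ) < K := lt_of_lt_of_le one_pos hK
  have hG0 : 0 < Gamma K := Gamma_pos_of_pos hK0
  have hG1 : 0 < Gamma (K + a) := Gamma_pos_of_pos (by linarith)
  have hKa : (0 : ℝ) < K ^ a := rpow_pos_of_pos hK0 _
  have hKa0 : (0 : ℝ) < K + a := by linarith
  constructor
  · -- lower bound
    have key := Gamma_mul_add_mul_le_rpow_Gamma_mul_rpow_Gamma
      (s := K + a) (t := K + a + 1) (a := a) (b := 1 - a)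
      (by linarith) (by linarith) ha (by linarith) (by ring)
    have harg : a * (K + a) + (1 - a) * (K + a + 1) = K + 1 := by ring
    rw [harg, Gamma_add_one hK0.ne', Gamma_add_one (by positivity : K + a ≠ 0)] at key
    have hkey : K * Gamma K ≤ Gamma (K + a) * (K + a) ^ (1 - a) := by
      calc K * Gamma K ≤ Gamma (K + a) ^ a * ((K + a) * Gamma (K + a)) ^ (1 - a) := key
        _ = Gamma (K + a) * (K + a) ^ (1 - a) := by
            rw [mul_rpow hKa0.le hG1.le, ← mul_assoc, mul_comm (Gamma (K+a) ^ a),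
              mul_assoc, ← Real.rpow_add hG1]
            norm_num
            ring
    rw [le_div_iff₀ (by positivity)]
    have hKK : K ^ (1 - a) * K ^ a = K := by
      rw [← Real.rpow_add hK0]; norm_num
    have hEq : (K / (K + a)) ^ (1 - a) * (Gamma K * K ^ a) =
        K * Gamma K / (K + a) ^ (1 - a) := by
      rw [Real.div_rpow hK0.le hKa0.le]
      field_simp
      exact hKK
    rw [hEq, div_le_iff₀ (by positivity)]
    linarith [hkey]
  · -- upper bound
    have key := Gamma_mul_add_mul_le_rpow_Gamma_mul_rpow_Gamma
      (s := K) (t := K + 1) (a := 1 - a) (b := a)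
      hK0 (by linarith) (by linarith) ha (by ring)
    have harg : (1 - a) * K + a * (K + 1) = K + a := by ring
    rw [harg, Gamma_add_one hK0.ne'] at key
    have hkey : Gamma (K + a) ≤ Gamma K * K ^ a := by
      calc Gamma (K + a) ≤ Gamma K ^ (1 - a) * (K * Gamma K) ^ a := key
        _ = Gamma K * K ^ a := by
            rw [mul_rpow hK0.le hG0.le, ← mul_assoc, mul_comm (Gamma K ^ (1 - a)),
              mul_assoc, mul_comm (Gamma K ^ (1-a)), ← Real.rpow_add hG0]
            norm_num
            ring
    rw [div_le_one (by positivity)]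
    exact hkey

private lemma tendsto_nat_div_add (c : ℝ) :
    Tendsto (fun k : ℕ => (k : ℝ) / ((k : ℝ) + c)) atTop (𝓝 1) := by
  have h0 : Tendsto (fun k : ℕ => c / (k : ℝ)) atTop (𝓝 0) :=
    Tendsto.div_atTop tendsto_const_nhds tendsto_natCast_atTop_atTop
  have h1 : Tendsto (fun k : ℕ => 1 + c / (k : ℝ)) atTop (𝓝 1) := by
    simpa using (tendsto_const_nhds (x := (1:ℝ)) (f := atTop (α := ℕ))).add h0
  have h2 : Tendsto (fun k : ℕ => (1 + c / (k : ℝ))⁻¹) atTop (𝓝 1) := by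
    simpa using h1.inv₀ one_ne_zero
  refine h2.congr' ?_
  filter_upwards [eventually_ge_atTop 1] with k hk
  have hk0 : (0 : ℝ) < (k : ℝ) := by exact_mod_cast hk
  rw [show (1 : ℝ) + c / (k : ℝ) = ((k : ℝ) + c) / (k : ℝ) by field_simp, inv_div]

private lemma tendsto_inv_nat_add (c : ℝ) :
    Tendsto (fun k : ℕ => 1 / ((k : ℝ) + c)) atTop (𝓝 0) :=
  Tendsto.div_atTop tendsto_const_nhds
    (tendsto_atTop_add_const_right _ c tendsto_natCast_atTop_atTop)

theorem std_decreasing_high_dim (d : ℝ) (hd : 2 < d) :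
    Tendsto (fun k : ℕ =>
        (k : ℝ) ^ ((1 : ℝ) / 2 - 1 / d) *
          Real.sqrt (Real.Gamma ((k : ℝ) + 2 / d) * Real.Gamma (k : ℝ)
            - Real.Gamma ((k : ℝ) + 1 / d) ^ 2) / Real.Gamma (k : ℝ))
      atTop (nhds (1 / d)) := by
  have hd0 : (0 : ℝ) < d := by linarith
  set a : ℝ := 1 / d with ha_def
  have ha : 0 < a := by positivity
  have ha2 : 2 * a ≤ 1 := by
    rw [ha_def]
    rw [mul_one_div, div_le_one hd0]
    linarith
  have ha1 : a < 1 := by linarith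
  have h2d : 2 / d = 2 * a := by rw [ha_def]; ring
  -- abbreviations
  set R : ℕ → ℝ := fun k =>
    Gamma ((k : ℝ) + 2 * a) * Gamma (k : ℝ) / Gamma ((k : ℝ) + a) ^ 2 with hR_def
  set W : ℕ → ℝ := fun k => Gamma ((k : ℝ) + a) / (Gamma (k : ℝ) * (k : ℝ) ^ a) with hW_def
  -- limit of k * (R k - 1)
  have T1 : Tendsto (fun k : ℕ => (k : ℝ) * (R k - 1)) atTop (𝓝 (a ^ 2)) := by
    set c : ℝ := 2 * a - 1 with hc_def
    have hg : Tendsto (fun k : ℕ =>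
        a ^ 2 * ((k : ℝ) / ((k : ℝ) + c)) +
          a ^ 4 * (((k : ℝ) / ((k : ℝ) + c)) * (1 / ((k : ℝ) + c)))) atTop (𝓝 (a ^ 2)) := by
      have h := ((tendsto_nat_div_add c).const_mul (a ^ 2)).add
        (((tendsto_nat_div_add c).mul (tendsto_inv_nat_add c)).const_mul (a ^ 4))
      simpa using h
    have hev : ∀ᶠ k : ℕ in atTop, a ^ 2 ≤ (k : ℝ) + c :=
      (tendsto_atTop_add_const_right _ c tendsto_natCast_atTop_atTop).eventually_ge_atTop _
    refine tendsto_of_tendsto_of_tendsto_of_le_of_le' tendsto_const_nhds hg ?_ ?_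
    · filter_upwards [eventually_ge_atTop 1] with k hk
      have hK : (1 : ℝ) ≤ (k : ℝ) := by exact_mod_cast hk
      have hK0 : (0 : ℝ) < (k : ℝ) := by linarith
      have hlow := (R_bounds_s12 ha ha2 hk).1
      have h1 : a ^ 2 / (k : ℝ) ≤ R k - 1 := by
        rw [hR_def]; dsimp only; linarith [hlow]
      calc a ^ 2 = (k : ℝ) * (a ^ 2 / (k : ℝ)) := by field_simp
        _ ≤ (k : ℝ) * (R k - 1) := mul_le_mul_of_nonneg_left h1 hK0.le
    · filter_upwards [eventually_ge_atTop 1, hev] with k hk hevk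
      have hK : (1 : ℝ) ≤ (k : ℝ) := by exact_mod_cast hk
      have hK0 : (0 : ℝ) < (k : ℝ) := by linarith
      have hKc : (0 : ℝ) < (k : ℝ) + c := by rw [hc_def]; push_cast; linarith
      have hup := (R_bounds_s12 ha ha2 hk).2
      have hcc : (k : ℝ) - 1 + 2 * a = (k : ℝ) + c := by rw [hc_def]; ring
      rw [hcc] at hup
      set u : ℝ := a ^ 2 / ((k : ℝ) + c) with hu_def
      have hu0 : 0 ≤ u := by positivity
      have hu1 : u ≤ 1 := by
        rw [hu_def, div_le_one hKc]; exact hevk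
      -- exp u ≤ 1 + u + u ^ 2
      have hexp : exp u ≤ 1 + u + u ^ 2 := by
        have hb := Real.exp_bound (x := u) (by rw [abs_of_nonneg hu0]; exact hu1)
          (n := 2) (by norm_num)
        have hsum : ∑ m ∈ Finset.range 2, u ^ m / m.factorial = 1 + u := by
          simp [Finset.sum_range_succ]
        rw [hsum, abs_of_nonneg hu0] at hb
        have h2 := (abs_le.1 hb).2
        norm_num [Nat.factorial] at h2
        nlinarith [sq_nonneg u]
      have hRu : R k ≤ exp u := by rw [hR_def]; dsimp only; exact hup
      have step : (k : ℝ) * (R k - 1) ≤ (k : ℝ) * (u + u ^ 2) := by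
        refine mul_le_mul_of_nonneg_left ?_ hK0.le
        linarith
      refine step.trans (le_of_eq ?_)
      rw [hu_def]
      field_simp
  -- limit of W
  have T2 : Tendsto W atTop (𝓝 1) := by
    have hlow : Tendsto (fun k : ℕ => ((k : ℝ) / ((k : ℝ) + a)) ^ (1 - a)) atTop (𝓝 1) := by
      have := (tendsto_nat_div_add a).rpow_const (Or.inr (by linarith : (0:ℝ) ≤ 1 - a))
      simpa using this
    refine tendsto_of_tendsto_of_tendsto_of_le_of_le' hlow tendsto_const_nhds ?_ ?_
    · filter_upwards [eventually_ge_atTop 1] with k hk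
      exact (W_bounds ha ha1 hk).1
    · filter_upwards [eventually_ge_atTop 1] with k hk
      exact (W_bounds ha ha1 hk).2
  -- assemble
  have hsq : Tendsto (fun k : ℕ => Real.sqrt ((k : ℝ) * (R k - 1))) atTop (𝓝 a) := by
    have := T1.sqrt
    rwa [Real.sqrt_sq ha.le] at this
  have hmain : Tendsto (fun k : ℕ => W k * Real.sqrt ((k : ℝ) * (R k - 1))) atTop (𝓝 a) := by
    have := T2.mul hsq
    rwa [one_mul] at this
  have hfinal : (𝓝 a) = (𝓝 (1 / d)) := by rw [ha_def]
  rw [← hfinal]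
  refine hmain.congr' ?_
  filter_upwards [eventually_ge_atTop 1] with k hk
  have hK : (1 : ℝ) ≤ (k : ℝ) := by exact_mod_cast hk
  have hK0 : (0 : ℝ) < (k : ℝ) := by linarith
  have hG0 : 0 < Gamma (k : ℝ) := Gamma_pos_of_pos hK0
  have hG1 : 0 < Gamma ((k : ℝ) + a) := Gamma_pos_of_pos (by linarith)
  have hKa : (0 : ℝ) < (k : ℝ) ^ a := rpow_pos_of_pos hK0 _
  have hR1 : 1 ≤ R k := by
    have := (R_bounds_s12 ha ha2 hk).1
    have h0 : 0 ≤ a ^ 2 / (k : ℝ) := by positivity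
    rw [hR_def]; dsimp only; linarith
  have hkey : Gamma ((k : ℝ) + 2 * a) * Gamma (k : ℝ) - Gamma ((k : ℝ) + a) ^ 2 =
      Gamma ((k : ℝ) + a) ^ 2 * (R k - 1) := by
    rw [hR_def]
    dsimp only
    rw [mul_sub, mul_div_cancel₀ _ (pow_ne_zero 2 hG1.ne'), mul_one]
  rw [h2d, hkey]
  rw [show Gamma ((k : ℝ) + a) ^ 2 * (R k - 1) = (Gamma ((k : ℝ) + a)) ^ 2 * (R k - 1) from rfl,
    Real.sqrt_mul (sq_nonneg _), Real.sqrt_sq hG1.le,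
    Real.sqrt_mul hK0.le, Real.rpow_sub hK0, ← Real.sqrt_eq_rpow]
  rw [hW_def]
  dsimp only
  field_simp
end
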